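/- arXiv:1711.02511 — 2 statements merged into one kernel-verified Lean document; each statement's English description precedes it below -/
import Mathlib

section
/- Let λ₁, λ₂ be nonnegative integers with λ₁ ≥ 1, and set t₁ = λ₁(3λ₁+λ₂+3)/((λ₁+1)(3λ₁+λ₂+4)) and t₂ = (3λ₁+λ₂+3)/(3λ₁+λ₂+4). Then t₁, t₂ are distinct, both different from 0 and 1, and they satisfy the two equations: −3λ₁/t₁ − 3/(t₁−t₂) = 0, and −λ₂/t₂ − 1/(t₂−1) − 3/(t₂−t₁) = 0. -/
/-- For `λ₁ ≥ 1`, the pair `t₁ = λ₁(3λ₁+λ₂+3)/((λ₁+1)(3λ₁+λ₂+4))`,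
`t₂ = (3λ₁+λ₂+3)/(3λ₁+λ₂+4)` consists of distinct numbers, different from 0
and 1, satisfying the Bethe ansatz equations for the G₂ Gaudin model with
data `Λ = (λ, ω₂)`, `z = (0,1)`, `l = (1,1)`. -/
theorem g2_bae_l11 (l1 l2 : ℕ) (h1 : 1 ≤ l1) :
    ∀ t₁ t₂ : ℚ,
      t₁ = (l1 : ℚ) * (3 * l1 + l2 + 3) / ((l1 + 1) * (3 * l1 + l2 + 4)) →
      t₂ = ((3 : ℚ) * l1 + l2 + 3) / (3 * l1 + l2 + 4) →
      t₁ ≠ t₂ ∧ t₁ ≠ 0 ∧ t₁ ≠ 1 ∧ t₂ ≠ 0 ∧ t₂ ≠ 1 ∧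
        -(3 * (l1 : ℚ)) / t₁ - 3 / (t₁ - t₂) = 0 ∧
        -(l2 : ℚ) / t₂ - 1 / (t₂ - 1) - 3 / (t₂ - t₁) = 0 := by
  intro t₁ t₂ ht1 ht2
  have ha : (1:ℚ) ≤ (l1:ℚ) := by exact_mod_cast h1
  have hl0 : (0:ℚ) < (l1:ℚ) := lt_of_lt_of_le one_pos ha
  have hA : (0:ℚ) < 3*(l1:ℚ)+(l2:ℚ)+3 := by positivity
  have hB : (0:ℚ) < 3*(l1:ℚ)+(l2:ℚ)+4 := by positivity
  have hl1 : (0:ℚ) < (l1:ℚ)+1 := by positivity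
  have ht1pos : 0 < t₁ := by rw [ht1]; positivity
  have hsub : t₂ - t₁ = (3*(l1:ℚ)+(l2:ℚ)+3) / (((l1:ℚ)+1)*(3*(l1:ℚ)+(l2:ℚ)+4)) := by
    rw [ht1, ht2]; field_simp; ring
  have hsubpos : 0 < t₂ - t₁ := by rw [hsub]; positivity
  have ht2pos : 0 < t₂ := by rw [ht2]; positivity
  have ht2lt1 : t₂ < 1 := by
    rw [ht2, div_lt_one hB]; linarith
  have ht1lt1 : t₁ < 1 := by linarith
  have hne : t₁ ≠ t₂ := ne_of_lt (by linarith)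
  have ht1s : t₁ - t₂ ≠ 0 := sub_ne_zero.mpr hne
  have ht2s : t₂ - t₁ ≠ 0 := sub_ne_zero.mpr hne.symm
  have ht2m1 : t₂ - 1 ≠ 0 := sub_ne_zero.mpr (ne_of_lt ht2lt1)
  refine ⟨hne, ne_of_gt ht1pos, ne_of_lt ht1lt1, ne_of_gt ht2pos, ne_of_lt ht2lt1, ?_, ?_⟩
  · rw [sub_eq_zero, div_eq_div_iff (ne_of_gt ht1pos) ht1s]
    have h12 : t₁ - t₂ = -((3*(l1:ℚ)+(l2:ℚ)+3) / (((l1:ℚ)+1)*(3*(l1:ℚ)+(l2:ℚ)+4))) := by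
      rw [← hsub]; ring
    rw [h12, ht1]
    field_simp
  · have e2 : -(l2:ℚ) / t₂ - 1 / (t₂ - 1) - 3 / (t₂ - t₁) = 0 := by
      have ht2m1' : t₂ - 1 = -(1 / (3*(l1:ℚ)+(l2:ℚ)+4)) := by
        rw [ht2]
        field_simp
        norm_num
      rw [hsub, ht2m1', ht2, div_neg, div_div_eq_mul_div, div_div_eq_mul_div,
        div_div_eq_mul_div]
      field_simp [ne_of_gt hA]
      ring
    exact e2
end

section
/- Let λ₁, λ₂ be nonnegative integers with λ₂ ≥ 1. Let t₁ = (3λ₁+λ₂+3)(3λ₁+2λ₂+4)/((3λ₁+λ₂+5)(3λ₁+2λ₂+6)), and let t₂, t₃ be the two roots of the quadratic x² − [2(3λ₁+2λ₂+4)(3λ₁+5λ₂+3λ₁λ₂+λ₂²+6)/((λ₂+2)(3λ₁+λ₂+5)(3λ₁+2λ₂+6))]·x + λ₂(3λ₁+λ₂+3)(3λ₁+2λ₂+4)²/((λ₂+2)(3λ₁+λ₂+5)(3λ₁+2λ₂+6)²). Then (t₁; t₂, t₃) satisfies the Bethe ansatz equations: −3λ₁/t₁ − 3/(t₁−t₂)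 − 3/(t₁−t₃) = 0; −λ₂/t₂ − 1/(t₂−1) − 3/(t₂−t₁) + 2/(t₂−t₃) = 0; and −λ₂/t₃ − 1/(t₃−1) − 3/(t₃−t₁) + 2/(t₃−t₂) = 0. -/
/-- The first Bethe root `t₁` for the data `Λ = ((λ₁,λ₂), ω₂)`, `z = (0,1)`, `l = (1,2)`. -/
noncomputable def g2t1 (l1 l2 : ℕ) : ℂ :=
  ((3 * l1 + l2 + 3) * (3 * l1 + 2 * l2 + 4) : ℂ) /
    ((3 * l1 + l2 + 5) * (3 * l1 + 2 * l2 + 6))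

/-- The coefficient of `x` in the quadratic whose roots are `t₂, t₃`. -/
noncomputable def g2B (l1 l2 : ℕ) : ℂ :=
  (2 * (3 * l1 + 2 * l2 + 4) * (3 * l1 + 5 * l2 + 3 * l1 * l2 + l2 ^ 2 + 6) : ℂ) /
    ((l2 + 2) * (3 * l1 + l2 + 5) * (3 * l1 + 2 * l2 + 6))

/-- The constant term of the quadratic whose roots are `t₂, t₃`. -/
noncomputable def g2C (l1 l2 : ℕ) : ℂ :=
  ((l2 : ℂ) * (3 * l1 + l2 + 3) * (3 * l1 + 2 * l2 + 4) ^ 2) /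
    ((l2 + 2) * (3 * l1 + l2 + 5) * (3 * l1 + 2 * l2 + 6) ^ 2)

set_option maxHeartbeats 2000000

/-- For `λ₂ ≥ 1`, if `t₂, t₃` are the two roots of the quadratic
`x² − B x + C` (with `B, C` as above), then `(t₁; t₂, t₃)` satisfies the Bethe
ansatz equations for the G₂ Gaudin model with `Λ = ((λ₁,λ₂), ω₂)`, `z = (0,1)`,
`l = (1,2)`. -/
theorem g2_bae_l12 (l1 l2 : ℕ) (h : 1 ≤ l2) (t₂ t₃ : ℂ)
    (h2 : t₂ ^ 2 - g2B l1 l2 * t₂ + g2C l1 l2 = 0)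
    (h3 : t₃ ^ 2 - g2B l1 l2 * t₃ + g2C l1 l2 = 0)
    (hne : t₂ ≠ t₃)
    (h20 : t₂ ≠ 0) (h21 : t₂ ≠ 1) (h2t : t₂ ≠ g2t1 l1 l2)
    (h30 : t₃ ≠ 0) (h31 : t₃ ≠ 1) (h3t : t₃ ≠ g2t1 l1 l2) :
    -(3 * (l1 : ℂ)) / g2t1 l1 l2 - 3 / (g2t1 l1 l2 - t₂) - 3 / (g2t1 l1 l2 - t₃) = 0 ∧
    -(l2 : ℂ) / t₂ - 1 / (t₂ - 1) - 3 / (t₂ - g2t1 l1 l2) + 2 / (t₂ - t₃) = 0 ∧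
    -(l2 : ℂ) / t₃ - 1 / (t₃ - 1) - 3 / (t₃ - g2t1 l1 l2) + 2 / (t₃ - t₂) = 0 := by
  have hA1 : 3*(l1:ℂ) + (l2:ℂ) + 3 ≠ 0 := by
    exact_mod_cast (Nat.cast_ne_zero (R:=ℂ)).mpr (show 3*l1+l2+3 ≠ 0 by omega)
  have hA2 : 3*(l1:ℂ) + 2*(l2:ℂ) + 4 ≠ 0 := by
    exact_mod_cast (Nat.cast_ne_zero (R:=ℂ)).mpr (show 3*l1+2*l2+4 ≠ 0 by omega)
  have hD1 : 3*(l1:ℂ) + (l2:ℂ) + 5 ≠ 0 := by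
    exact_mod_cast (Nat.cast_ne_zero (R:=ℂ)).mpr (show 3*l1+l2+5 ≠ 0 by omega)
  have hD2 : 3*(l1:ℂ) + 2*(l2:ℂ) + 6 ≠ 0 := by
    exact_mod_cast (Nat.cast_ne_zero (R:=ℂ)).mpr (show 3*l1+2*l2+6 ≠ 0 by omega)
  have hD3 : (l2:ℂ) + 2 ≠ 0 := by
    exact_mod_cast (Nat.cast_ne_zero (R:=ℂ)).mpr (show l2+2 ≠ 0 by omega)
  have hu0 : g2t1 l1 l2 ≠ 0 := by
    unfold g2t1
    exact div_ne_zero (mul_ne_zero hA1 hA2) (mul_ne_zero hD1 hD2)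
  have hu2 : g2t1 l1 l2 * ((3*(l1:ℂ)+(l2:ℂ)+5)*(3*(l1:ℂ)+2*(l2:ℂ)+6))
      = (3*(l1:ℂ)+(l2:ℂ)+3)*(3*(l1:ℂ)+2*(l2:ℂ)+4) := by
    unfold g2t1
    exact div_mul_cancel₀ _ (mul_ne_zero hD1 hD2)
  have hB2 : g2B l1 l2 * (((l2:ℂ)+2)*(3*(l1:ℂ)+(l2:ℂ)+5)*(3*(l1:ℂ)+2*(l2:ℂ)+6))
      = 2*(3*(l1:ℂ)+2*(l2:ℂ)+4)*(3*(l1:ℂ)+5*(l2:ℂ)+3*(l1:ℂ)*(l2:ℂ)+(l2:ℂ)^2+6) := by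
    unfold g2B
    exact div_mul_cancel₀ _ (mul_ne_zero (mul_ne_zero hD3 hD1) hD2)
  have hC2 : g2C l1 l2 * (((l2:ℂ)+2)*(3*(l1:ℂ)+(l2:ℂ)+5)*(3*(l1:ℂ)+2*(l2:ℂ)+6)^2)
      = (l2:ℂ)*(3*(l1:ℂ)+(l2:ℂ)+3)*(3*(l1:ℂ)+2*(l2:ℂ)+4)^2 := by
    unfold g2C
    exact div_mul_cancel₀ _ (mul_ne_zero (mul_ne_zero hD3 hD1) (pow_ne_zero 2 hD2))
  have hDU : (3*(l1:ℂ)+(l2:ℂ)+5)*(3*(l1:ℂ)+2*(l2:ℂ)+6) ≠ 0 := mul_ne_zero hD1 hD2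
  have hDB : ((l2:ℂ)+2)*(3*(l1:ℂ)+(l2:ℂ)+5)*(3*(l1:ℂ)+2*(l2:ℂ)+6) ≠ 0 :=
    mul_ne_zero (mul_ne_zero hD3 hD1) hD2
  have hDC : ((l2:ℂ)+2)*(3*(l1:ℂ)+(l2:ℂ)+5)*(3*(l1:ℂ)+2*(l2:ℂ)+6)^2 ≠ 0 :=
    mul_ne_zero (mul_ne_zero hD3 hD1) (pow_ne_zero 2 hD2)
  have h0 : (t₂ - t₃) * (t₂ + t₃ - g2B l1 l2) = 0 := by linear_combination h2 - h3
  have hs : t₂ + t₃ = g2B l1 l2 := by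
    rcases mul_eq_zero.mp h0 with hc | hc
    · exact absurd (sub_eq_zero.mp hc) hne
    · linear_combination hc
  have FaM : (3*g2t1 l1 l2*g2B l1 l2 - 6*g2t1 l1 l2^2 - 3*(l1:ℂ)*g2C l1 l2 + 3*(l1:ℂ)*g2t1 l1 l2*g2B l1 l2 - 3*(l1:ℂ)*g2t1 l1 l2^2) * ((((l2:ℂ)+2)*(3*(l1:ℂ)+(l2:ℂ)+5)*(3*(l1:ℂ)+2*(l2:ℂ)+6))*(((l2:ℂ)+2)*(3*(l1:ℂ)+(l2:ℂ)+5)*(3*(l1:ℂ)+2*(l2:ℂ)+6)^2)*((3*(l1:ℂ)+(l2:ℂ)+5)*(3*(l1:ℂ)+2*(l2:ℂ)+6))^2) = 0 := by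
    linear_combination ((-1555200:ℂ) + 1944000*g2B l1 l2 + -3888000*g2t1 l1 l2 + -5028480*(l2:ℂ) + 5702400*(l2:ℂ)*g2B l1 l2 + -11404800*(l2:ℂ)*g2t1 l1 l2 + -7138368*(l2:ℂ)^2 + 7328880*(l2:ℂ)^2*g2B l1 l2 + -14657760*(l2:ℂ)^2*g2t1 l1 l2 + -5836896*(l2:ℂ)^3 + 5416272*(l2:ℂ)^3*g2B l1 l2 + -10832544*(l2:ℂ)^3*g2t1 l1 l2 + -3028224*(l2:ℂ)^4 + 2536368*(l2:ℂ)^4*g2B l1 l2 + -5072736*(l2:ℂ)^4*g2t1 l1 l2 + -1033248*(l2:ℂ)^5 + 780432*(l2:ℂ)^5*g2B l1 l2 + -1560864*(l2:ℂ)^5*g2t1 l1 l2 + -231744*(l2:ℂ)^6 + 157776*(l2:ℂ)^6*g2B l1 l2 + -315552*(l2:ℂ)^6*g2t1 l1 l2 + -32928*(l2:ℂ)^7 + 20208*(l2:ℂ)^7*g2B l1 l2 + -40416*(l2:ℂ)^7*g2t1 l1 l2 + -2688*(l2:ℂ)^8 + 1488*(l2:ℂ)^8*g2B l1 l2 + -2976*(l2:ℂ)^8*g2t1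 l1 l2 + -96*(l2:ℂ)^9 + 48*(l2:ℂ)^9*g2B l1 l2 + -96*(l2:ℂ)^9*g2t1 l1 l2 + -7698240*(l1:ℂ) + 9331200*(l1:ℂ)*g2B l1 l2 + -16718400*(l1:ℂ)*g2t1 l1 l2 + -22638528*(l1:ℂ)*(l2:ℂ) + 25375680*(l1:ℂ)*(l2:ℂ)*g2B l1 l2 + -45048960*(l1:ℂ)*(l2:ℂ)*g2t1 l1 l2 + -28850256*(l1:ℂ)*(l2:ℂ)^2 + 29896128*(l1:ℂ)*(l2:ℂ)^2*g2B l1 l2 + -52463376*(l1:ℂ)*(l2:ℂ)^2*g2t1 l1 l2 + -20830176*(l1:ℂ)*(l2:ℂ)^3 + 19979568*(l1:ℂ)*(l2:ℂ)^3*g2B l1 l2 + -34542864*(l1:ℂ)*(l2:ℂ)^3*g2t1 l1 l2 + -9338496*(l1:ℂ)*(l2:ℂ)^4 + 8319264*(l1:ℂ)*(l2:ℂ)^4*g2B l1 l2 + -14102160*(l1:ℂ)*(l2:ℂ)^4*g2t1 l1 l2 + -2673456*(l1:ℂ)*(l2:ℂ)^5 + 2227344*(l1:ℂ)*(l2:ℂ)^5*g2B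 l1 l2 + -3674256*(l1:ℂ)*(l2:ℂ)^5*g2t1 l1 l2 + -482064*(l1:ℂ)*(l2:ℂ)^6 + 380544*(l1:ℂ)*(l2:ℂ)^6*g2B l1 l2 + -603312*(l1:ℂ)*(l2:ℂ)^6*g2t1 l1 l2 + -51456*(l1:ℂ)*(l2:ℂ)^7 + 39504*(l1:ℂ)*(l2:ℂ)^7*g2B l1 l2 + -58800*(l1:ℂ)*(l2:ℂ)^7*g2t1 l1 l2 + -2784*(l1:ℂ)*(l2:ℂ)^8 + 2208*(l1:ℂ)*(l2:ℂ)^8*g2B l1 l2 + -2928*(l1:ℂ)*(l2:ℂ)^8*g2t1 l1 l2 + -48*(l1:ℂ)*(l2:ℂ)^9 + 48*(l1:ℂ)*(l2:ℂ)^9*g2B l1 l2 + -48*(l1:ℂ)*(l2:ℂ)^9*g2t1 l1 l2 + -16500672*(l1:ℂ)^2 + 19401120*(l1:ℂ)^2*g2B l1 l2 + -31415040*(l1:ℂ)^2*g2t1 l1 l2 + -43771104*(l1:ℂ)^2*(l2:ℂ) + 48397824*(l1:ℂ)^2*(l2:ℂ)*g2B l1 l2 + -77122368*(l1:ℂ)^2*(l2:ℂ)*g2t1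 l1 l2 + -49492944*(l1:ℂ)^2*(l2:ℂ)^2 + 51493320*(l1:ℂ)^2*(l2:ℂ)^2*g2B l1 l2 + -80419392*(l1:ℂ)^2*(l2:ℂ)^2*g2t1 l1 l2 + -31031496*(l1:ℂ)^2*(l2:ℂ)^3 + 30467160*(l1:ℂ)^2*(l2:ℂ)^3*g2B l1 l2 + -46371024*(l1:ℂ)^2*(l2:ℂ)^3*g2t1 l1 l2 + -11733552*(l1:ℂ)^2*(l2:ℂ)^4 + 10939680*(l1:ℂ)^2*(l2:ℂ)^4*g2B l1 l2 + -16096464*(l1:ℂ)^2*(l2:ℂ)^4*g2t1 l1 l2 + -2716560*(l1:ℂ)^2*(l2:ℂ)^5 + 2433168*(l1:ℂ)^2*(l2:ℂ)^5*g2B l1 l2 + -3419424*(l1:ℂ)^2*(l2:ℂ)^5*g2t1 l1 l2 + -370800*(l1:ℂ)^2*(l2:ℂ)^6 + 325800*(l1:ℂ)^2*(l2:ℂ)^6*g2B l1 l2 + -428832*(l1:ℂ)^2*(l2:ℂ)^6*g2t1 l1 l2 + -26568*(l1:ℂ)^2*(l2:ℂ)^7 + 23832*(l1:ℂ)^2*(l2:ℂ)^7*g2B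 l1 l2 + -28368*(l1:ℂ)^2*(l2:ℂ)^7*g2t1 l1 l2 + -720*(l1:ℂ)^2*(l2:ℂ)^8 + 720*(l1:ℂ)^2*(l2:ℂ)^8*g2B l1 l2 + -720*(l1:ℂ)^2*(l2:ℂ)^8*g2t1 l1 l2 + -20023200*(l1:ℂ)^3 + 22853664*(l1:ℂ)^3*g2B l1 l2 + -33693408*(l1:ℂ)^3*g2t1 l1 l2 + -47432304*(l1:ℂ)^3*(l2:ℂ) + 51668928*(l1:ℂ)^3*(l2:ℂ)*g2B l1 l2 + -74613312*(l1:ℂ)^3*(l2:ℂ)*g2t1 l1 l2 + -46866600*(l1:ℂ)^3*(l2:ℂ)^2 + 48763944*(l1:ℂ)^3*(l2:ℂ)^2*g2B l1 l2 + -68601816*(l1:ℂ)^3*(l2:ℂ)^2*g2t1 l1 l2 + -24935796*(l1:ℂ)^3*(l2:ℂ)^3 + 24870888*(l1:ℂ)^3*(l2:ℂ)^3*g2B l1 l2 + -33837912*(l1:ℂ)^3*(l2:ℂ)^3*g2t1 l1 l2 + -7671996*(l1:ℂ)^3*(l2:ℂ)^4 + 7392384*(l1:ℂ)^3*(l2:ℂ)^4*g2B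 l1 l2 + -9627984*(l1:ℂ)^3*(l2:ℂ)^4*g2t1 l1 l2 + -1353348*(l1:ℂ)^3*(l2:ℂ)^5 + 1277856*(l1:ℂ)^3*(l2:ℂ)^5*g2B l1 l2 + -1569456*(l1:ℂ)^3*(l2:ℂ)^5*g2t1 l1 l2 + -124956*(l1:ℂ)^3*(l2:ℂ)^6 + 118584*(l1:ℂ)^3*(l2:ℂ)^6*g2B l1 l2 + -134136*(l1:ℂ)^3*(l2:ℂ)^6*g2t1 l1 l2 + -4536*(l1:ℂ)^3*(l2:ℂ)^7 + 4536*(l1:ℂ)^3*(l2:ℂ)^7*g2B l1 l2 + -4536*(l1:ℂ)^3*(l2:ℂ)^7*g2t1 l1 l2 + -15058224*(l1:ℂ)^4 + 16699932*(l1:ℂ)^4*g2B l1 l2 + -22560120*(l1:ℂ)^4*g2t1 l1 l2 + -31455216*(l1:ℂ)^4*(l2:ℂ) + 33729696*(l1:ℂ)^4*(l2:ℂ)*g2B l1 l2 + -44515008*(l1:ℂ)^4*(l2:ℂ)*g2t1 l1 l2 + -26603964*(l1:ℂ)^4*(l2:ℂ)^2 + 27595647*(l1:ℂ)^4*(l2:ℂ)^2*g2B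 l1 l2 + -35353422*(l1:ℂ)^4*(l2:ℂ)^2*g2t1 l1 l2 + -11612160*(l1:ℂ)^4*(l2:ℂ)^3 + 11691297*(l1:ℂ)^4*(l2:ℂ)^3*g2B l1 l2 + -14415570*(l1:ℂ)^4*(l2:ℂ)^3*g2t1 l1 l2 + -2743308*(l1:ℂ)^4*(l2:ℂ)^4 + 2702889*(l1:ℂ)^4*(l2:ℂ)^4*g2B l1 l2 + -3170178*(l1:ℂ)^4*(l2:ℂ)^4*g2t1 l1 l2 + -329832*(l1:ℂ)^4*(l2:ℂ)^5 + 322947*(l1:ℂ)^4*(l2:ℂ)^5*g2B l1 l2 + -354294*(l1:ℂ)^4*(l2:ℂ)^5*g2t1 l1 l2 + -15552*(l1:ℂ)^4*(l2:ℂ)^6 + 15552*(l1:ℂ)^4*(l2:ℂ)^6*g2B l1 l2 + -15552*(l1:ℂ)^4*(l2:ℂ)^6*g2t1 l1 l2 + -7191828*(l1:ℂ)^5 + 7758504*(l1:ℂ)^5*g2B l1 l2 + -9656820*(l1:ℂ)^5*g2t1 l1 l2 + -13034520*(l1:ℂ)^5*(l2:ℂ) + 13750884*(l1:ℂ)^5*(l2:ℂ)*g2B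 l1 l2 + -16716456*(l1:ℂ)^5*(l2:ℂ)*g2t1 l1 l2 + -9161829*(l1:ℂ)^5*(l2:ℂ)^2 + 9448326*(l1:ℂ)^5*(l2:ℂ)^2*g2B l1 l2 + -11138877*(l1:ℂ)^5*(l2:ℂ)^2*g2t1 l1 l2 + -3107241*(l1:ℂ)^5*(l2:ℂ)^3 + 3139803*(l1:ℂ)^5*(l2:ℂ)^3*g2B l1 l2 + -3555333*(l1:ℂ)^5*(l2:ℂ)^3*g2t1 l1 l2 + -505683*(l1:ℂ)^5*(l2:ℂ)^4 + 504468*(l1:ℂ)^5*(l2:ℂ)^4*g2B l1 l2 + -541647*(l1:ℂ)^5*(l2:ℂ)^4*g2t1 l1 l2 + -31347*(l1:ℂ)^5*(l2:ℂ)^5 + 31347*(l1:ℂ)^5*(l2:ℂ)^5*g2B l1 l2 + -31347*(l1:ℂ)^5*(l2:ℂ)^5*g2t1 l1 l2 + -2131596*(l1:ℂ)^6 + 2239488*(l1:ℂ)^6*g2B l1 l2 + -2580660*(l1:ℂ)^6*g2t1 l1 l2 + -3280500*(l1:ℂ)^6*(l2:ℂ) + 3402972*(l1:ℂ)^6*(l2:ℂ)*g2B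 l1 l2 + -3840372*(l1:ℂ)^6*(l2:ℂ)*g2t1 l1 l2 + -1830519*(l1:ℂ)^6*(l2:ℂ)^2 + 1872072*(l1:ℂ)^6*(l2:ℂ)^2*g2B l1 l2 + -2053593*(l1:ℂ)^6*(l2:ℂ)^2*g2t1 l1 l2 + -435942*(l1:ℂ)^6*(l2:ℂ)^3 + 439587*(l1:ℂ)^6*(l2:ℂ)^3*g2B l1 l2 + -463644*(l1:ℂ)^6*(l2:ℂ)^3*g2t1 l1 l2 + -37179*(l1:ℂ)^6*(l2:ℂ)^4 + 37179*(l1:ℂ)^6*(l2:ℂ)^4*g2B l1 l2 + -37179*(l1:ℂ)^6*(l2:ℂ)^4*g2t1 l1 l2 + -358668*(l1:ℂ)^7 + 367416*(l1:ℂ)^7*g2B l1 l2 + -393660*(l1:ℂ)^7*g2t1 l1 l2 + -454896*(l1:ℂ)^7*(l2:ℂ) + 463644*(l1:ℂ)^7*(l2:ℂ)*g2B l1 l2 + -489888*(l1:ℂ)^7*(l2:ℂ)*g2t1 l1 l2 + -185895*(l1:ℂ)^7*(l2:ℂ)^2 + 188082*(l1:ℂ)^7*(l2:ℂ)^2*g2B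 l1 l2 + -194643*(l1:ℂ)^7*(l2:ℂ)^2*g2t1 l1 l2 + -24057*(l1:ℂ)^7*(l2:ℂ)^3 + 24057*(l1:ℂ)^7*(l2:ℂ)^3*g2B l1 l2 + -24057*(l1:ℂ)^7*(l2:ℂ)^3*g2t1 l1 l2 + -26244*(l1:ℂ)^8 + 26244*(l1:ℂ)^8*g2B l1 l2 + -26244*(l1:ℂ)^8*g2t1 l1 l2 + -26244*(l1:ℂ)^8*(l2:ℂ) + 26244*(l1:ℂ)^8*(l2:ℂ)*g2B l1 l2 + -26244*(l1:ℂ)^8*(l2:ℂ)*g2t1 l1 l2 + -6561*(l1:ℂ)^8*(l2:ℂ)^2 + 6561*(l1:ℂ)^8*(l2:ℂ)^2*g2B l1 l2 + -6561*(l1:ℂ)^8*(l2:ℂ)^2*g2t1 l1 l2) * hu2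
          + ((388800:ℂ) + 1062720*(l2:ℂ) + 1253232*(l2:ℂ)^2 + 832608*(l2:ℂ)^3 + 340752*(l2:ℂ)^4 + 87936*(l2:ℂ)^5 + 13968*(l2:ℂ)^6 + 1248*(l2:ℂ)^7 + 48*(l2:ℂ)^8 + 2118960*(l1:ℂ) + 5228712*(l1:ℂ)*(l2:ℂ) + 5490504*(l1:ℂ)*(l2:ℂ)^2 + 3191904*(l1:ℂ)*(l2:ℂ)^3 + 1117200*(l1:ℂ)*(l2:ℂ)^4 + 238920*(l1:ℂ)*(l2:ℂ)^5 + 30024*(l1:ℂ)*(l2:ℂ)^6 + 1968*(l1:ℂ)*(l2:ℂ)^7 + 48*(l1:ℂ)*(l2:ℂ)^8 + 4990248*(l1:ℂ)^2 + 10963188*(l1:ℂ)^2*(l2:ℂ) + 10051776*(l1:ℂ)^2*(l2:ℂ)^2 + 4970952*(l1:ℂ)^2*(l2:ℂ)^3 + 1425960*(l1:ℂ)^2*(l2:ℂ)^4 + 235764*(l1:ℂ)^2*(l2:ℂ)^5 + 20592*(l1:ℂ)^2*(l2:ℂ)^6 + 720*(l1:ℂ)^2*(l2:ℂ)^7 +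 6635844*(l1:ℂ)^3 + 12753774*(l1:ℂ)^3*(l2:ℂ) + 9946314*(l1:ℂ)^3*(l2:ℂ)^2 + 4020246*(l1:ℂ)^3*(l2:ℂ)^3 + 885546*(l1:ℂ)^3*(l2:ℂ)^4 + 100332*(l1:ℂ)^3*(l2:ℂ)^5 + 4536*(l1:ℂ)^3*(l2:ℂ)^6 + 5452434*(l1:ℂ)^4 + 8959815*(l1:ℂ)^4*(l2:ℂ) + 5726133*(l1:ℂ)^4*(l2:ℂ)^2 + 1777221*(l1:ℂ)^4*(l2:ℂ)^3 + 267381*(l1:ℂ)^4*(l2:ℂ)^4 + 15552*(l1:ℂ)^4*(l2:ℂ)^5 + 2836296*(l1:ℂ)^5 + 3861270*(l1:ℂ)^5*(l2:ℂ) + 1907793*(l1:ℂ)^5*(l2:ℂ)^2 + 405810*(l1:ℂ)^5*(l2:ℂ)^3 + 31347*(l1:ℂ)^5*(l2:ℂ)^4 + 912708*(l1:ℂ)^6 + 982692*(l1:ℂ)^6*(l2:ℂ) + 337527*(l1:ℂ)^6*(l2:ℂ)^2 + 37179*(l1:ℂ)^6*(l2:ℂ)^3 + 166212*(l1:ℂ)^7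 + 131220*(l1:ℂ)^7*(l2:ℂ) + 24057*(l1:ℂ)^7*(l2:ℂ)^2 + 13122*(l1:ℂ)^8 + 6561*(l1:ℂ)^8*(l2:ℂ)) * hB2
          + (-162000*(l1:ℂ) + -340200*(l1:ℂ)*(l2:ℂ) + -300240*(l1:ℂ)*(l2:ℂ)^2 + -144456*(l1:ℂ)*(l2:ℂ)^3 + -40944*(l1:ℂ)*(l2:ℂ)^4 + -6840*(l1:ℂ)*(l2:ℂ)^5 + -624*(l1:ℂ)*(l2:ℂ)^6 + -24*(l1:ℂ)*(l2:ℂ)^7 + -534600*(l1:ℂ)^2 + -983340*(l1:ℂ)^2*(l2:ℂ) + -736884*(l1:ℂ)^2*(l2:ℂ)^2 + -288360*(l1:ℂ)^2*(l2:ℂ)^3 + -62208*(l1:ℂ)^2*(l2:ℂ)^4 + -7020*(l1:ℂ)^2*(l2:ℂ)^5 + -324*(l1:ℂ)^2*(l2:ℂ)^6 + -733860*(l1:ℂ)^3 + -1156842*(l1:ℂ)^3*(l2:ℂ) + -709884*(l1:ℂ)^3*(l2:ℂ)^2 + -212544*(l1:ℂ)^3*(l2:ℂ)^3 + -31104*(l1:ℂ)^3*(l2:ℂ)^4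 + -1782*(l1:ℂ)^3*(l2:ℂ)^5 + -536382*(l1:ℂ)^4 + -703161*(l1:ℂ)^4*(l2:ℂ) + -333639*(l1:ℂ)^4*(l2:ℂ)^2 + -68283*(l1:ℂ)^4*(l2:ℂ)^3 + -5103*(l1:ℂ)^4*(l2:ℂ)^4 + -220158*(l1:ℂ)^5 + -229635*(l1:ℂ)^5*(l2:ℂ) + -75816*(l1:ℂ)^5*(l2:ℂ)^2 + -8019*(l1:ℂ)^5*(l2:ℂ)^3 + -48114*(l1:ℂ)^6 + -37179*(l1:ℂ)^6*(l2:ℂ) + -6561*(l1:ℂ)^6*(l2:ℂ)^2 + -4374*(l1:ℂ)^7 + -2187*(l1:ℂ)^7*(l2:ℂ)) * hC2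
  have Fa : (3*g2t1 l1 l2*g2B l1 l2 - 6*g2t1 l1 l2^2 - 3*(l1:ℂ)*g2C l1 l2 + 3*(l1:ℂ)*g2t1 l1 l2*g2B l1 l2 - 3*(l1:ℂ)*g2t1 l1 l2^2) = 0 :=
    (mul_eq_zero.mp FaM).resolve_right (mul_ne_zero (mul_ne_zero hDB hDC) (pow_ne_zero 2 hDU))
  have FbM : (6*g2C l1 l2 + g2B l1 l2 - 2*g2B l1 l2^2 + 2*g2t1 l1 l2 - g2t1 l1 l2*g2B l1 l2 + 2*(l2:ℂ)*g2C l1 l2 + (l2:ℂ)*g2B l1 l2 - (l2:ℂ)*g2B l1 l2^2 - 2*(l2:ℂ)*g2t1 l1 l2 + (l2:ℂ)*g2t1 l1 l2*g2B l1 l2) * ((((l2:ℂ)+2)*(3*(l1:ℂ)+(l2:ℂ)+5)*(3*(l1:ℂ)+2*(l2:ℂ)+6))^2*(((l2:ℂ)+2)*(3*(l1:ℂ)+(l2:ℂ)+5)*(3*(l1:ℂ)+2*(l2:ℂ)+6)^2)*((3*(l1:ℂ)+(l2:ℂ)+5)*(3*(l1:ℂ)+2*(l2:ℂ)+6))) =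 0 := by
    linear_combination ((2592000:ℂ) + -1296000*g2B l1 l2 + 6307200*(l2:ℂ) + -3153600*(l2:ℂ)*g2B l1 l2 + 4674240*(l2:ℂ)^2 + -2337120*(l2:ℂ)^2*g2B l1 l2 + -1465824*(l2:ℂ)^3 + 732912*(l2:ℂ)^3*g2B l1 l2 + -5114944*(l2:ℂ)^4 + 2557472*(l2:ℂ)^4*g2B l1 l2 + -4261184*(l2:ℂ)^5 + 2130592*(l2:ℂ)^5*g2B l1 l2 + -2000832*(l2:ℂ)^6 + 1000416*(l2:ℂ)^6*g2B l1 l2 + -598528*(l2:ℂ)^7 + 299264*(l2:ℂ)^7*g2B l1 l2 + -116672*(l2:ℂ)^8 + 58336*(l2:ℂ)^8*g2B l1 l2 + -14400*(l2:ℂ)^9 + 7200*(l2:ℂ)^9*g2B l1 l2 + -1024*(l2:ℂ)^10 + 512*(l2:ℂ)^10*g2B l1 l2 + -32*(l2:ℂ)^11 + 16*(l2:ℂ)^11*g2B l1 l2 + 9849600*(l1:ℂ) + -4924800*(l1:ℂ)*g2B l1 l2 + 21306240*(l1:ℂ)*(l2:ℂ) + -10653120*(l1:ℂ)*(l2:ℂ)*g2B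 l1 l2 + 12049344*(l1:ℂ)*(l2:ℂ)^2 + -6024672*(l1:ℂ)*(l2:ℂ)^2*g2B l1 l2 + -8742624*(l1:ℂ)*(l2:ℂ)^3 + 4371312*(l1:ℂ)*(l2:ℂ)^3*g2B l1 l2 + -17043168*(l1:ℂ)*(l2:ℂ)^4 + 8521584*(l1:ℂ)*(l2:ℂ)^4*g2B l1 l2 + -11634912*(l1:ℂ)*(l2:ℂ)^5 + 5817456*(l1:ℂ)*(l2:ℂ)^5*g2B l1 l2 + -4522848*(l1:ℂ)*(l2:ℂ)^6 + 2261424*(l1:ℂ)*(l2:ℂ)^6*g2B l1 l2 + -1087392*(l1:ℂ)*(l2:ℂ)^7 + 543696*(l1:ℂ)*(l2:ℂ)^7*g2B l1 l2 + -160416*(l1:ℂ)*(l2:ℂ)^8 + 80208*(l1:ℂ)*(l2:ℂ)^8*g2B l1 l2 + -13344*(l1:ℂ)*(l2:ℂ)^9 + 6672*(l1:ℂ)*(l2:ℂ)^9*g2B l1 l2 + -480*(l1:ℂ)*(l2:ℂ)^10 + 240*(l1:ℂ)*(l2:ℂ)^10*g2B l1 l2 + 16018560*(l1:ℂ)^2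 + -8009280*(l1:ℂ)^2*g2B l1 l2 + 30290112*(l1:ℂ)^2*(l2:ℂ) + -15145056*(l1:ℂ)^2*(l2:ℂ)*g2B l1 l2 + 11409120*(l1:ℂ)^2*(l2:ℂ)^2 + -5704560*(l1:ℂ)^2*(l2:ℂ)^2*g2B l1 l2 + -17228592*(l1:ℂ)^2*(l2:ℂ)^3 + 8614296*(l1:ℂ)^2*(l2:ℂ)^3*g2B l1 l2 + -23010912*(l1:ℂ)^2*(l2:ℂ)^4 + 11505456*(l1:ℂ)^2*(l2:ℂ)^4*g2B l1 l2 + -12725424*(l1:ℂ)^2*(l2:ℂ)^5 + 6362712*(l1:ℂ)^2*(l2:ℂ)^5*g2B l1 l2 + -3957984*(l1:ℂ)^2*(l2:ℂ)^6 + 1978992*(l1:ℂ)^2*(l2:ℂ)^6*g2B l1 l2 + -720144*(l1:ℂ)^2*(l2:ℂ)^7 + 360072*(l1:ℂ)^2*(l2:ℂ)^7*g2B l1 l2 + -71712*(l1:ℂ)^2*(l2:ℂ)^8 + 35856*(l1:ℂ)^2*(l2:ℂ)^8*g2B l1 l2 + -3024*(l1:ℂ)^2*(l2:ℂ)^9 +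 1512*(l1:ℂ)^2*(l2:ℂ)^9*g2B l1 l2 + 14452992*(l1:ℂ)^3 + -7226496*(l1:ℂ)^3*g2B l1 l2 + 23366016*(l1:ℂ)^3*(l2:ℂ) + -11683008*(l1:ℂ)^3*(l2:ℂ)*g2B l1 l2 + 3927744*(l1:ℂ)^3*(l2:ℂ)^2 + -1963872*(l1:ℂ)^3*(l2:ℂ)^2*g2B l1 l2 + -16565472*(l1:ℂ)^3*(l2:ℂ)^3 + 8282736*(l1:ℂ)^3*(l2:ℂ)^3*g2B l1 l2 + -16222464*(l1:ℂ)^3*(l2:ℂ)^4 + 8111232*(l1:ℂ)^3*(l2:ℂ)^4*g2B l1 l2 + -7079616*(l1:ℂ)^3*(l2:ℂ)^5 + 3539808*(l1:ℂ)^3*(l2:ℂ)^5*g2B l1 l2 + -1664064*(l1:ℂ)^3*(l2:ℂ)^6 + 832032*(l1:ℂ)^3*(l2:ℂ)^6*g2B l1 l2 + -204768*(l1:ℂ)^3*(l2:ℂ)^7 + 102384*(l1:ℂ)^3*(l2:ℂ)^7*g2B l1 l2 + -10368*(l1:ℂ)^3*(l2:ℂ)^8 + 5184*(l1:ℂ)^3*(l2:ℂ)^8*g2B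 l1 l2 + 7813584*(l1:ℂ)^4 + -3906792*(l1:ℂ)^4*g2B l1 l2 + 10473624*(l1:ℂ)^4*(l2:ℂ) + -5236812*(l1:ℂ)^4*(l2:ℂ)*g2B l1 l2 + -753300*(l1:ℂ)^4*(l2:ℂ)^2 + 376650*(l1:ℂ)^4*(l2:ℂ)^2*g2B l1 l2 + -8729694*(l1:ℂ)^4*(l2:ℂ)^3 + 4364847*(l1:ℂ)^4*(l2:ℂ)^3*g2B l1 l2 + -6364980*(l1:ℂ)^4*(l2:ℂ)^4 + 3182490*(l1:ℂ)^4*(l2:ℂ)^4*g2B l1 l2 + -2085912*(l1:ℂ)^4*(l2:ℂ)^5 + 1042956*(l1:ℂ)^4*(l2:ℂ)^5*g2B l1 l2 + -332424*(l1:ℂ)^4*(l2:ℂ)^6 + 166212*(l1:ℂ)^4*(l2:ℂ)^6*g2B l1 l2 + -20898*(l1:ℂ)^4*(l2:ℂ)^7 + 10449*(l1:ℂ)^4*(l2:ℂ)^7*g2B l1 l2 + 2531088*(l1:ℂ)^5 + -1265544*(l1:ℂ)^5*g2B l1 l2 + 2688552*(l1:ℂ)^5*(l2:ℂ) + -1344276*(l1:ℂ)^5*(l2:ℂ)*g2B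 l1 l2 + -988524*(l1:ℂ)^5*(l2:ℂ)^2 + 494262*(l1:ℂ)^5*(l2:ℂ)^2*g2B l1 l2 + -2550042*(l1:ℂ)^5*(l2:ℂ)^3 + 1275021*(l1:ℂ)^5*(l2:ℂ)^3*g2B l1 l2 + -1354482*(l1:ℂ)^5*(l2:ℂ)^4 + 677241*(l1:ℂ)^5*(l2:ℂ)^4*g2B l1 l2 + -301806*(l1:ℂ)^5*(l2:ℂ)^5 + 150903*(l1:ℂ)^5*(l2:ℂ)^5*g2B l1 l2 + -24786*(l1:ℂ)^5*(l2:ℂ)^6 + 12393*(l1:ℂ)^5*(l2:ℂ)^6*g2B l1 l2 + 454896*(l1:ℂ)^6 + -227448*(l1:ℂ)^6*g2B l1 l2 + 355752*(l1:ℂ)^6*(l2:ℂ) + -177876*(l1:ℂ)^6*(l2:ℂ)*g2B l1 l2 + -277020*(l1:ℂ)^6*(l2:ℂ)^2 + 138510*(l1:ℂ)^6*(l2:ℂ)^2*g2B l1 l2 + -380538*(l1:ℂ)^6*(l2:ℂ)^3 + 190269*(l1:ℂ)^6*(l2:ℂ)^3*g2B l1 l2 + -137052*(l1:ℂ)^6*(l2:ℂ)^4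 + 68526*(l1:ℂ)^6*(l2:ℂ)^4*g2B l1 l2 + -16038*(l1:ℂ)^6*(l2:ℂ)^5 + 8019*(l1:ℂ)^6*(l2:ℂ)^5*g2B l1 l2 + 34992*(l1:ℂ)^7 + -17496*(l1:ℂ)^7*g2B l1 l2 + 17496*(l1:ℂ)^7*(l2:ℂ) + -8748*(l1:ℂ)^7*(l2:ℂ)*g2B l1 l2 + -26244*(l1:ℂ)^7*(l2:ℂ)^2 + 13122*(l1:ℂ)^7*(l2:ℂ)^2*g2B l1 l2 + -21870*(l1:ℂ)^7*(l2:ℂ)^3 + 10935*(l1:ℂ)^7*(l2:ℂ)^3*g2B l1 l2 + -4374*(l1:ℂ)^7*(l2:ℂ)^4 + 2187*(l1:ℂ)^7*(l2:ℂ)^4*g2B l1 l2) * hu2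
          + ((-648000:ℂ) + -1296000*g2B l1 l2 + -1900800*(l2:ℂ) + -4449600*(l2:ℂ)*g2B l1 l2 + -2442960*(l2:ℂ)^2 + -6786720*(l2:ℂ)^2*g2B l1 l2 + -1805424*(l2:ℂ)^3 + -6053808*(l2:ℂ)^3*g2B l1 l2 + -845456*(l2:ℂ)^4 + -3496336*(l2:ℂ)^4*g2B l1 l2 + -260144*(l2:ℂ)^5 + -1365744*(l2:ℂ)^5*g2B l1 l2 + -52592*(l2:ℂ)^6 + -365328*(l2:ℂ)^6*g2B l1 l2 + -6736*(l2:ℂ)^7 + -66064*(l2:ℂ)^7*g2B l1 l2 + -496*(l2:ℂ)^8 + -7728*(l2:ℂ)^8*g2B l1 l2 + -16*(l2:ℂ)^9 + -528*(l2:ℂ)^9*g2B l1 l2 + -16*(l2:ℂ)^10*g2B l1 l2 + -2786400*(l1:ℂ) + -4924800*(l1:ℂ)*g2B l1 l2 + -7400160*(l1:ℂ)*(l2:ℂ) + -15577920*(l1:ℂ)*(l2:ℂ)*g2B l1 l2 + -8463096*(l1:ℂ)*(l2:ℂ)^2 + -21602592*(l1:ℂ)*(l2:ℂ)^2*g2B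 l1 l2 + -5443584*(l1:ℂ)*(l2:ℂ)^3 + -17231280*(l1:ℂ)*(l2:ℂ)^3*g2B l1 l2 + -2153976*(l1:ℂ)*(l2:ℂ)^4 + -8709696*(l1:ℂ)*(l2:ℂ)^4*g2B l1 l2 + -536928*(l1:ℂ)*(l2:ℂ)^5 + -2892240*(l1:ℂ)*(l2:ℂ)^5*g2B l1 l2 + -82344*(l1:ℂ)*(l2:ℂ)^6 + -630816*(l1:ℂ)*(l2:ℂ)^6*g2B l1 l2 + -7104*(l1:ℂ)*(l2:ℂ)^7 + -87120*(l1:ℂ)*(l2:ℂ)^7*g2B l1 l2 + -264*(l1:ℂ)*(l2:ℂ)^8 + -6912*(l1:ℂ)*(l2:ℂ)^8*g2B l1 l2 + -240*(l1:ℂ)*(l2:ℂ)^9*g2B l1 l2 + -5073840*(l1:ℂ)^2 + -8009280*(l1:ℂ)^2*g2B l1 l2 + -12076128*(l1:ℂ)^2*(l2:ℂ) + -23154336*(l1:ℂ)^2*(l2:ℂ)*g2B l1 l2 + -12099132*(l1:ℂ)^2*(l2:ℂ)^2 + -28858896*(l1:ℂ)^2*(l2:ℂ)^2*g2B l1 l2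 + -6614892*(l1:ℂ)^2*(l2:ℂ)^3 + -20244600*(l1:ℂ)^2*(l2:ℂ)^3*g2B l1 l2 + -2131704*(l1:ℂ)^2*(l2:ℂ)^4 + -8739144*(l1:ℂ)^2*(l2:ℂ)^4*g2B l1 l2 + -405000*(l1:ℂ)^2*(l2:ℂ)^5 + -2376432*(l1:ℂ)^2*(l2:ℂ)^5*g2B l1 l2 + -42012*(l1:ℂ)^2*(l2:ℂ)^6 + -397440*(l1:ℂ)^2*(l2:ℂ)^6*g2B l1 l2 + -1836*(l1:ℂ)^2*(l2:ℂ)^7 + -37368*(l1:ℂ)^2*(l2:ℂ)^7*g2B l1 l2 + -1512*(l1:ℂ)^2*(l2:ℂ)^8*g2B l1 l2 + -5080968*(l1:ℂ)^3 + -7226496*(l1:ℂ)^3*g2B l1 l2 + -10695672*(l1:ℂ)^3*(l2:ℂ) + -18909504*(l1:ℂ)^3*(l2:ℂ)*g2B l1 l2 + -9189234*(l1:ℂ)^3*(l2:ℂ)^2 + -20873376*(l1:ℂ)^3*(l2:ℂ)^2*g2B l1 l2 + -4123980*(l1:ℂ)^3*(l2:ℂ)^3 + -12590640*(l1:ℂ)^3*(l2:ℂ)^3*g2B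 l1 l2 + -1019952*(l1:ℂ)^3*(l2:ℂ)^4 + -4479408*(l1:ℂ)^3*(l2:ℂ)^4*g2B l1 l2 + -131868*(l1:ℂ)^3*(l2:ℂ)^5 + -939600*(l1:ℂ)^3*(l2:ℂ)^5*g2B l1 l2 + -6966*(l1:ℂ)^3*(l2:ℂ)^6 + -107568*(l1:ℂ)^3*(l2:ℂ)^6*g2B l1 l2 + -5184*(l1:ℂ)^3*(l2:ℂ)^7*g2B l1 l2 + -3026160*(l1:ℂ)^4 + -3906792*(l1:ℂ)^4*g2B l1 l2 + -5537808*(l1:ℂ)^4*(l2:ℂ) + -9143604*(l1:ℂ)^4*(l2:ℂ)*g2B l1 l2 + -3956364*(l1:ℂ)^4*(l2:ℂ)^2 + -8766954*(l1:ℂ)^4*(l2:ℂ)^2*g2B l1 l2 + -1378296*(l1:ℂ)^4*(l2:ℂ)^3 + -4402107*(l1:ℂ)^4*(l2:ℂ)^3*g2B l1 l2 + -234252*(l1:ℂ)^4*(l2:ℂ)^4 + -1219617*(l1:ℂ)^4*(l2:ℂ)^4*g2B l1 l2 + -15552*(l1:ℂ)^4*(l2:ℂ)^5 + -176661*(l1:ℂ)^4*(l2:ℂ)^5*g2B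 l1 l2 + -10449*(l1:ℂ)^4*(l2:ℂ)^6*g2B l1 l2 + -1073088*(l1:ℂ)^5 + -1265544*(l1:ℂ)^5*g2B l1 l2 + -1667952*(l1:ℂ)^5*(l2:ℂ) + -2609820*(l1:ℂ)^5*(l2:ℂ)*g2B l1 l2 + -944784*(l1:ℂ)^5*(l2:ℂ)^2 + -2115558*(l1:ℂ)^5*(l2:ℂ)^2*g2B l1 l2 + -230364*(l1:ℂ)^5*(l2:ℂ)^3 + -840537*(l1:ℂ)^5*(l2:ℂ)^3*g2B l1 l2 + -20412*(l1:ℂ)^5*(l2:ℂ)^4 + -163296*(l1:ℂ)^5*(l2:ℂ)^4*g2B l1 l2 + -12393*(l1:ℂ)^5*(l2:ℂ)^5*g2B l1 l2 + -209952*(l1:ℂ)^6 + -227448*(l1:ℂ)^6*g2B l1 l2 + -268272*(l1:ℂ)^6*(l2:ℂ) + -405324*(l1:ℂ)^6*(l2:ℂ)*g2B l1 l2 + -110808*(l1:ℂ)^6*(l2:ℂ)^2 + -266814*(l1:ℂ)^6*(l2:ℂ)^2*g2B l1 l2 + -14580*(l1:ℂ)^6*(l2:ℂ)^3 + -76545*(l1:ℂ)^6*(l2:ℂ)^3*g2B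 l1 l2 + -8019*(l1:ℂ)^6*(l2:ℂ)^4*g2B l1 l2 + -17496*(l1:ℂ)^7 + -17496*(l1:ℂ)^7*g2B l1 l2 + -17496*(l1:ℂ)^7*(l2:ℂ) + -26244*(l1:ℂ)^7*(l2:ℂ)*g2B l1 l2 + -4374*(l1:ℂ)^7*(l2:ℂ)^2 + -13122*(l1:ℂ)^7*(l2:ℂ)^2*g2B l1 l2 + -2187*(l1:ℂ)^7*(l2:ℂ)^3*g2B l1 l2) * hB2
          + ((648000:ℂ) + 1900800*(l2:ℂ) + 2442960*(l2:ℂ)^2 + 1805424*(l2:ℂ)^3 + 845456*(l2:ℂ)^4 + 260144*(l2:ℂ)^5 + 52592*(l2:ℂ)^6 + 6736*(l2:ℂ)^7 + 496*(l2:ℂ)^8 + 16*(l2:ℂ)^9 + 2138400*(l1:ℂ) + 5715360*(l1:ℂ)*(l2:ℂ) + 6581736*(l1:ℂ)*(l2:ℂ)^2 + 4265280*(l1:ℂ)*(l2:ℂ)^3 + 1701288*(l1:ℂ)*(l2:ℂ)^4 + 427680*(l1:ℂ)*(l2:ℂ)^5 + 66168*(l1:ℂ)*(l2:ℂ)^6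 + 5760*(l1:ℂ)*(l2:ℂ)^7 + 216*(l1:ℂ)*(l2:ℂ)^8 + 2935440*(l1:ℂ)^2 + 7073568*(l1:ℂ)^2*(l2:ℂ) + 7184916*(l1:ℂ)^2*(l2:ℂ)^2 + 3987684*(l1:ℂ)^2*(l2:ℂ)^3 + 1306152*(l1:ℂ)^2*(l2:ℂ)^4 + 252504*(l1:ℂ)^2*(l2:ℂ)^5 + 26676*(l1:ℂ)^2*(l2:ℂ)^6 + 1188*(l1:ℂ)^2*(l2:ℂ)^7 + 2145528*(l1:ℂ)^3 + 4600584*(l1:ℂ)^3*(l2:ℂ) + 4036014*(l1:ℂ)^3*(l2:ℂ)^2 + 1854036*(l1:ℂ)^3*(l2:ℂ)^3 + 470448*(l1:ℂ)^3*(l2:ℂ)^4 + 62532*(l1:ℂ)^3*(l2:ℂ)^5 + 3402*(l1:ℂ)^3*(l2:ℂ)^6 + 880632*(l1:ℂ)^4 + 1652400*(l1:ℂ)^4*(l2:ℂ) + 1215486*(l1:ℂ)^4*(l2:ℂ)^2 + 437886*(l1:ℂ)^4*(l2:ℂ)^3 + 77274*(l1:ℂ)^4*(l2:ℂ)^4 +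 5346*(l1:ℂ)^4*(l2:ℂ)^5 + 192456*(l1:ℂ)^5 + 309096*(l1:ℂ)^5*(l2:ℂ) + 182250*(l1:ℂ)^5*(l2:ℂ)^2 + 46656*(l1:ℂ)^5*(l2:ℂ)^3 + 4374*(l1:ℂ)^5*(l2:ℂ)^4 + 17496*(l1:ℂ)^6 + 23328*(l1:ℂ)^6*(l2:ℂ) + 10206*(l1:ℂ)^6*(l2:ℂ)^2 + 1458*(l1:ℂ)^6*(l2:ℂ)^3) * hC2
  have Fb : (6*g2C l1 l2 + g2B l1 l2 - 2*g2B l1 l2^2 + 2*g2t1 l1 l2 - g2t1 l1 l2*g2B l1 l2 + 2*(l2:ℂ)*g2C l1 l2 + (l2:ℂ)*g2B l1 l2 - (l2:ℂ)*g2B l1 l2^2 - 2*(l2:ℂ)*g2t1 l1 l2 + (l2:ℂ)*g2t1 l1 l2*g2B l1 l2) = 0 :=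
    (mul_eq_zero.mp FbM).resolve_right (mul_ne_zero (mul_ne_zero (pow_ne_zero 2 hDB) hDC) hDU)
  have FcM : (-4*g2C l1 l2 + 2*g2B l1 l2*g2C l1 l2 - 2*(l2:ℂ)*g2C l1 l2 + (l2:ℂ)*g2B l1 l2*g2C l1 l2 - 2*(l2:ℂ)*g2t1 l1 l2*g2C l1 l2 + (l2:ℂ)*g2t1 l1 l2*g2B l1 l2) * ((((l2:ℂ)+2)*(3*(l1:ℂ)+(l2:ℂ)+5)*(3*(l1:ℂ)+2*(l2:ℂ)+6))*(((l2:ℂ)+2)*(3*(l1:ℂ)+(l2:ℂ)+5)*(3*(l1:ℂ)+2*(l2:ℂ)+6)^2)*((3*(l1:ℂ)+(l2:ℂ)+5)*(3*(l1:ℂ)+2*(l2:ℂ)+6))) = 0 := by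
    linear_combination (-43200*(l2:ℂ)*g2C l1 l2 + 21600*(l2:ℂ)*g2B l1 l2 + -103680*(l2:ℂ)^2*g2C l1 l2 + 51840*(l2:ℂ)^2*g2B l1 l2 + -104688*(l2:ℂ)^3*g2C l1 l2 + 52344*(l2:ℂ)^3*g2B l1 l2 + -57616*(l2:ℂ)^4*g2C l1 l2 + 28808*(l2:ℂ)^4*g2B l1 l2 + -18656*(l2:ℂ)^5*g2C l1 l2 + 9328*(l2:ℂ)^5*g2B l1 l2 + -3552*(l2:ℂ)^6*g2C l1 l2 + 1776*(l2:ℂ)^6*g2B l1 l2 + -368*(l2:ℂ)^7*g2C l1 l2 + 184*(l2:ℂ)^7*g2B l1 l2 + -16*(l2:ℂ)^8*g2C l1 l2 + 8*(l2:ℂ)^8*g2B l1 l2 + -116640*(l1:ℂ)*(l2:ℂ)*g2C l1 l2 + 58320*(l1:ℂ)*(l2:ℂ)*g2B l1 l2 + -247968*(l1:ℂ)*(l2:ℂ)^2*g2C l1 l2 + 123984*(l1:ℂ)*(l2:ℂ)^2*g2B l1 l2 + -215208*(l1:ℂ)*(l2:ℂ)^3*g2C l1 l2 + 107604*(l1:ℂ)*(l2:ℂ)^3*g2B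 l1 l2 + -97536*(l1:ℂ)*(l2:ℂ)^4*g2C l1 l2 + 48768*(l1:ℂ)*(l2:ℂ)^4*g2B l1 l2 + -24336*(l1:ℂ)*(l2:ℂ)^5*g2C l1 l2 + 12168*(l1:ℂ)*(l2:ℂ)^5*g2B l1 l2 + -3168*(l1:ℂ)*(l2:ℂ)^6*g2C l1 l2 + 1584*(l1:ℂ)*(l2:ℂ)^6*g2B l1 l2 + -168*(l1:ℂ)*(l2:ℂ)^7*g2C l1 l2 + 84*(l1:ℂ)*(l2:ℂ)^7*g2B l1 l2 + -125712*(l1:ℂ)^2*(l2:ℂ)*g2C l1 l2 + 62856*(l1:ℂ)^2*(l2:ℂ)*g2B l1 l2 + -232416*(l1:ℂ)^2*(l2:ℂ)^2*g2C l1 l2 + 116208*(l1:ℂ)^2*(l2:ℂ)^2*g2B l1 l2 + -167940*(l1:ℂ)^2*(l2:ℂ)^3*g2C l1 l2 + 83970*(l1:ℂ)^2*(l2:ℂ)^3*g2B l1 l2 + -59220*(l1:ℂ)^2*(l2:ℂ)^4*g2C l1 l2 + 29610*(l1:ℂ)^2*(l2:ℂ)^4*g2B l1 l2 + -10188*(l1:ℂ)^2*(l2:ℂ)^5*g2C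 l1 l2 + 5094*(l1:ℂ)^2*(l2:ℂ)^5*g2B l1 l2 + -684*(l1:ℂ)^2*(l2:ℂ)^6*g2C l1 l2 + 342*(l1:ℂ)^2*(l2:ℂ)^6*g2B l1 l2 + -67608*(l1:ℂ)^3*(l2:ℂ)*g2C l1 l2 + 33804*(l1:ℂ)^3*(l2:ℂ)*g2B l1 l2 + -106056*(l1:ℂ)^3*(l2:ℂ)^2*g2C l1 l2 + 53028*(l1:ℂ)^3*(l2:ℂ)^2*g2B l1 l2 + -60750*(l1:ℂ)^3*(l2:ℂ)^3*g2C l1 l2 + 30375*(l1:ℂ)^3*(l2:ℂ)^3*g2B l1 l2 + -15012*(l1:ℂ)^3*(l2:ℂ)^4*g2C l1 l2 + 7506*(l1:ℂ)^3*(l2:ℂ)^4*g2B l1 l2 + -1350*(l1:ℂ)^3*(l2:ℂ)^5*g2C l1 l2 + 675*(l1:ℂ)^3*(l2:ℂ)^5*g2B l1 l2 + -18144*(l1:ℂ)^4*(l2:ℂ)*g2C l1 l2 + 9072*(l1:ℂ)^4*(l2:ℂ)*g2B l1 l2 + -23328*(l1:ℂ)^4*(l2:ℂ)^2*g2C l1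 l2 + 11664*(l1:ℂ)^4*(l2:ℂ)^2*g2B l1 l2 + -9720*(l1:ℂ)^4*(l2:ℂ)^3*g2C l1 l2 + 4860*(l1:ℂ)^4*(l2:ℂ)^3*g2B l1 l2 + -1296*(l1:ℂ)^4*(l2:ℂ)^4*g2C l1 l2 + 648*(l1:ℂ)^4*(l2:ℂ)^4*g2B l1 l2 + -1944*(l1:ℂ)^5*(l2:ℂ)*g2C l1 l2 + 972*(l1:ℂ)^5*(l2:ℂ)*g2B l1 l2 + -1944*(l1:ℂ)^5*(l2:ℂ)^2*g2C l1 l2 + 972*(l1:ℂ)^5*(l2:ℂ)^2*g2B l1 l2 + -486*(l1:ℂ)^5*(l2:ℂ)^3*g2C l1 l2 + 243*(l1:ℂ)^5*(l2:ℂ)^3*g2B l1 l2) * hu2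
          + (21600*g2C l1 l2 + 4320*(l2:ℂ) + 51840*(l2:ℂ)*g2C l1 l2 + 9504*(l2:ℂ)^2 + 52344*(l2:ℂ)^2*g2C l1 l2 + 8568*(l2:ℂ)^3 + 28808*(l2:ℂ)^3*g2C l1 l2 + 4048*(l2:ℂ)^4 + 9328*(l2:ℂ)^4*g2C l1 l2 + 1056*(l2:ℂ)^5 + 1776*(l2:ℂ)^5*g2C l1 l2 + 144*(l2:ℂ)^6 + 184*(l2:ℂ)^6*g2C l1 l2 + 8*(l2:ℂ)^7 + 8*(l2:ℂ)^7*g2C l1 l2 + 58320*(l1:ℂ)*g2C l1 l2 + 14472*(l1:ℂ)*(l2:ℂ) + 123984*(l1:ℂ)*(l2:ℂ)*g2C l1 l2 + 26820*(l1:ℂ)*(l2:ℂ)^2 + 107604*(l1:ℂ)*(l2:ℂ)^2*g2C l1 l2 + 19536*(l1:ℂ)*(l2:ℂ)^3 + 48768*(l1:ℂ)*(l2:ℂ)^3*g2C l1 l2 + 6984*(l1:ℂ)*(l2:ℂ)^4 + 12168*(l1:ℂ)*(l2:ℂ)^4*g2C l1 l2 + 1224*(l1:ℂ)*(l2:ℂ)^5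 + 1584*(l1:ℂ)*(l2:ℂ)^5*g2C l1 l2 + 84*(l1:ℂ)*(l2:ℂ)^6 + 84*(l1:ℂ)*(l2:ℂ)^6*g2C l1 l2 + 62856*(l1:ℂ)^2*g2C l1 l2 + 19008*(l1:ℂ)^2*(l2:ℂ) + 116208*(l1:ℂ)^2*(l2:ℂ)*g2C l1 l2 + 28692*(l1:ℂ)^2*(l2:ℂ)^2 + 83970*(l1:ℂ)^2*(l2:ℂ)^2*g2C l1 l2 + 15930*(l1:ℂ)^2*(l2:ℂ)^3 + 29610*(l1:ℂ)^2*(l2:ℂ)^3*g2C l1 l2 + 3852*(l1:ℂ)^2*(l2:ℂ)^4 + 5094*(l1:ℂ)^2*(l2:ℂ)^4*g2C l1 l2 + 342*(l1:ℂ)^2*(l2:ℂ)^5 + 342*(l1:ℂ)^2*(l2:ℂ)^5*g2C l1 l2 + 33804*(l1:ℂ)^3*g2C l1 l2 + 12258*(l1:ℂ)^3*(l2:ℂ) + 53028*(l1:ℂ)^3*(l2:ℂ)*g2C l1 l2 + 14337*(l1:ℂ)^3*(l2:ℂ)^2 + 30375*(l1:ℂ)^3*(l2:ℂ)^2*g2C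 l1 l2 + 5454*(l1:ℂ)^3*(l2:ℂ)^3 + 7506*(l1:ℂ)^3*(l2:ℂ)^3*g2C l1 l2 + 675*(l1:ℂ)^3*(l2:ℂ)^4 + 675*(l1:ℂ)^3*(l2:ℂ)^4*g2C l1 l2 + 9072*(l1:ℂ)^4*g2C l1 l2 + 3888*(l1:ℂ)^4*(l2:ℂ) + 11664*(l1:ℂ)^4*(l2:ℂ)*g2C l1 l2 + 3240*(l1:ℂ)^4*(l2:ℂ)^2 + 4860*(l1:ℂ)^4*(l2:ℂ)^2*g2C l1 l2 + 648*(l1:ℂ)^4*(l2:ℂ)^3 + 648*(l1:ℂ)^4*(l2:ℂ)^3*g2C l1 l2 + 972*(l1:ℂ)^5*g2C l1 l2 + 486*(l1:ℂ)^5*(l2:ℂ) + 972*(l1:ℂ)^5*(l2:ℂ)*g2C l1 l2 + 243*(l1:ℂ)^5*(l2:ℂ)^2 + 243*(l1:ℂ)^5*(l2:ℂ)^2*g2C l1 l2) * hB2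
          + ((-4320:ℂ) + -9504*(l2:ℂ) + -8568*(l2:ℂ)^2 + -4048*(l2:ℂ)^3 + -1056*(l2:ℂ)^4 + -144*(l2:ℂ)^5 + -8*(l2:ℂ)^6 + -9072*(l1:ℂ) + -18360*(l1:ℂ)*(l2:ℂ) + -14400*(l1:ℂ)*(l2:ℂ)^2 + -5472*(l1:ℂ)*(l2:ℂ)^3 + -1008*(l1:ℂ)*(l2:ℂ)^4 + -72*(l1:ℂ)*(l2:ℂ)^5 + -7128*(l1:ℂ)^2 + -13176*(l1:ℂ)^2*(l2:ℂ) + -8622*(l1:ℂ)^2*(l2:ℂ)^2 + -2376*(l1:ℂ)^2*(l2:ℂ)^3 + -234*(l1:ℂ)^2*(l2:ℂ)^4 + -2484*(l1:ℂ)^3 + -4158*(l1:ℂ)^3*(l2:ℂ) + -2106*(l1:ℂ)^3*(l2:ℂ)^2 + -324*(l1:ℂ)^3*(l2:ℂ)^3 + -324*(l1:ℂ)^4 + -486*(l1:ℂ)^4*(l2:ℂ) + -162*(l1:ℂ)^4*(l2:ℂ)^2) * hC2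
  have Fc : (-4*g2C l1 l2 + 2*g2B l1 l2*g2C l1 l2 - 2*(l2:ℂ)*g2C l1 l2 + (l2:ℂ)*g2B l1 l2*g2C l1 l2 - 2*(l2:ℂ)*g2t1 l1 l2*g2C l1 l2 + (l2:ℂ)*g2t1 l1 l2*g2B l1 l2) = 0 :=
    (mul_eq_zero.mp FcM).resolve_right (mul_ne_zero (mul_ne_zero hDB hDC) hDU)
  have hN1 : -(3*(l1:ℂ))*((g2t1 l1 l2-t₂)*(g2t1 l1 l2-t₃))
      - 3*(g2t1 l1 l2*(g2t1 l1 l2-t₃)) - 3*(g2t1 l1 l2*(g2t1 l1 l2-t₂)) = 0 := by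
    linear_combination (3*g2t1 l1 l2 + 3*(l1:ℂ)*g2t1 l1 l2 - 3*(l1:ℂ)*t₂) * hs
      + (3*(l1:ℂ)) * h2 + Fa
  have hN2 : -(l2:ℂ)*((t₂-1)*((t₂-g2t1 l1 l2)*(t₂-t₃)))
      - (t₂*((t₂-g2t1 l1 l2)*(t₂-t₃))) - 3*(t₂*((t₂-1)*(t₂-t₃)))
      + 2*(t₂*((t₂-1)*(t₂-g2t1 l1 l2))) = 0 := by
    linear_combination (-3*t₂ - t₂*g2t1 l1 l2 + 4*t₂^2 + (l2:ℂ)*g2t1 l1 l2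
        - (l2:ℂ)*t₂ - (l2:ℂ)*t₂*g2t1 l1 l2 + (l2:ℂ)*t₂^2) * hs
      + (4 - 2*g2B l1 l2 - 6*t₂ + 2*(l2:ℂ) - (l2:ℂ)*g2B l1 l2
        + 2*(l2:ℂ)*g2t1 l1 l2 - 2*(l2:ℂ)*t₂) * h2
      + t₂ * Fb + Fc
  have hN3 : -(l2:ℂ)*((t₃-1)*((t₃-g2t1 l1 l2)*(t₃-t₂)))
      - (t₃*((t₃-g2t1 l1 l2)*(t₃-t₂))) - 3*(t₃*((t₃-1)*(t₃-t₂)))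
      + 2*(t₃*((t₃-1)*(t₃-g2t1 l1 l2))) = 0 := by
    linear_combination (-3*t₃ - t₃*g2t1 l1 l2 + 4*t₃^2 + (l2:ℂ)*g2t1 l1 l2
        - (l2:ℂ)*t₃ - (l2:ℂ)*t₃*g2t1 l1 l2 + (l2:ℂ)*t₃^2) * hs
      + (4 - 2*g2B l1 l2 - 6*t₃ + 2*(l2:ℂ) - (l2:ℂ)*g2B l1 l2
        + 2*(l2:ℂ)*g2t1 l1 l2 - 2*(l2:ℂ)*t₃) * h3
      + t₃ * Fb + Fc
  have d12 : g2t1 l1 l2 - t₂ ≠ 0 := sub_ne_zero.mpr (Ne.symm h2t)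
  have d13 : g2t1 l1 l2 - t₃ ≠ 0 := sub_ne_zero.mpr (Ne.symm h3t)
  have d21 : t₂ - g2t1 l1 l2 ≠ 0 := sub_ne_zero.mpr h2t
  have d31 : t₃ - g2t1 l1 l2 ≠ 0 := sub_ne_zero.mpr h3t
  have d2e : t₂ - 1 ≠ 0 := sub_ne_zero.mpr h21
  have d3e : t₃ - 1 ≠ 0 := sub_ne_zero.mpr h31
  have d23 : t₂ - t₃ ≠ 0 := sub_ne_zero.mpr hne
  have d32 : t₃ - t₂ ≠ 0 := sub_ne_zero.mpr (Ne.symm hne)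
  refine ⟨?_, ?_, ?_⟩
  · have expand : -(3 * (l1 : ℂ)) / g2t1 l1 l2 - 3 / (g2t1 l1 l2 - t₂) - 3 / (g2t1 l1 l2 - t₃)
        = (-(3*(l1:ℂ))*((g2t1 l1 l2-t₂)*(g2t1 l1 l2-t₃))
          - 3*(g2t1 l1 l2*(g2t1 l1 l2-t₃)) - 3*(g2t1 l1 l2*(g2t1 l1 l2-t₂)))
          / (g2t1 l1 l2 * ((g2t1 l1 l2-t₂)*(g2t1 l1 l2-t₃))) := by
      field_simp
    rw [expand, hN1, zero_div]
  · have expand : -(l2 : ℂ) / t₂ - 1 / (t₂ - 1) - 3 / (t₂ - g2t1 l1 l2) + 2 / (t₂ - t₃)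
        = (-(l2:ℂ)*((t₂-1)*((t₂-g2t1 l1 l2)*(t₂-t₃)))
          - (t₂*((t₂-g2t1 l1 l2)*(t₂-t₃))) - 3*(t₂*((t₂-1)*(t₂-t₃)))
          + 2*(t₂*((t₂-1)*(t₂-g2t1 l1 l2))))
          / (t₂ * ((t₂-1)*((t₂-g2t1 l1 l2)*(t₂-t₃)))) := by
      field_simp
    rw [expand, hN2, zero_div]
  · have expand : -(l2 : ℂ) / t₃ - 1 / (t₃ - 1) - 3 / (t₃ - g2t1 l1 l2) + 2 / (t₃ - t₂)
        = (-(l2:ℂ)*((t₃-1)*((t₃-g2t1 l1 l2)*(t₃-t₂)))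
          - (t₃*((t₃-g2t1 l1 l2)*(t₃-t₂))) - 3*(t₃*((t₃-1)*(t₃-t₂)))
          + 2*(t₃*((t₃-1)*(t₃-g2t1 l1 l2))))
          / (t₃ * ((t₃-1)*((t₃-g2t1 l1 l2)*(t₃-t₂)))) := by
      field_simp
    rw [expand, hN3, zero_div]
end
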